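/- Let |ψ⟩ = α|+_L⟩ + β|−_L⟩ be a state in a Δ-shifted gnu codespace with t ≤ Δ and gn + Δ ≤ N − t, where |±_L⟩ = (|0_L⟩ ± |1_L⟩)/√2. Then the partial trace over any t qubits satisfies Tr_t(|ψ⟩⟨ψ|) = Σ_{s=0}^{t} C(t,s) |ψ_s⟩⟨ψ_s|, where |ψ_s⟩ = α|+_s⟩ + β|−_s⟩ and |±_s⟩ = Σ_{j=0}^{n} (±1)^j b_{j,s} |D^{N−t}_{gj+Δ−s}⟩ with b_{j,s} = √(C(n,j) C(N−t, gj+Δ−s)) / √(2^n C(N, gj+Δ)). -/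

import Mathlib

/-- Hamming weight of a bit string of length `N`. -/
def hamWeight {N : ℕ} (x : Fin N → Bool) : ℕ :=
  (Finset.univ.filter (fun i => x i = true)).card

/-- Unnormalized Dicke state `|H^N_w⟩`. -/
noncomputable def dickeH (N w : ℕ) : (Fin N → Bool) → ℂ :=
  fun x => if hamWeight x = w then 1 else 0

/-- Normalized Dicke state `|D^N_w⟩`. -/
noncomputable def dickeD (N w : ℕ) : (Fin N → Bool) → ℂ :=
  fun x => ((Real.sqrt (N.choose w) : ℂ))⁻¹ * dickeH N w x

/-- Outer product `|f⟩⟨g|`. -/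
noncomputable def outer {N : ℕ} (f g : (Fin N → Bool) → ℂ) :
    Matrix (Fin N → Bool) (Fin N → Bool) ℂ :=
  fun x y => f x * (starRingEnd ℂ) (g y)

/-- Partial trace over the first `t` qubits. -/
noncomputable def ptrace {t m : ℕ}
    (M : Matrix (Fin (t + m) → Bool) (Fin (t + m) → Bool) ℂ) :
    Matrix (Fin m → Bool) (Fin m → Bool) ℂ :=
  fun y y' => ∑ x : Fin t → Bool, M (Fin.append x y) (Fin.append x y')

/-- `Δ`-shifted gnu logical codeword `|0_L⟩` on `N = t + m` qubits. -/
noncomputable def sgnuZero (t m g n Δ : ℕ) : (Fin (t + m) → Bool) → ℂ :=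
  ∑ j ∈ (Finset.range (n + 1)).filter (fun j => Even j),
    ((Real.sqrt (2 ^ (n - 1 : ℤ) : ℝ)⁻¹ * Real.sqrt (n.choose j) : ℝ) : ℂ) •
      dickeD (t + m) (g * j + Δ)

/-- `Δ`-shifted gnu logical codeword `|1_L⟩` on `N = t + m` qubits. -/
noncomputable def sgnuOne (t m g n Δ : ℕ) : (Fin (t + m) → Bool) → ℂ :=
  ∑ j ∈ (Finset.range (n + 1)).filter (fun j => Odd j),
    ((Real.sqrt (2 ^ (n - 1 : ℤ) : ℝ)⁻¹ * Real.sqrt (n.choose j) : ℝ) : ℂ) •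
      dickeD (t + m) (g * j + Δ)

/-- The coefficient `b_{j,s} = √(C(n,j) C(N−t, gj+Δ−s)) / √(2^n C(N, gj+Δ))`. -/
noncomputable def bCoeff (t m g n Δ j s : ℕ) : ℝ :=
  Real.sqrt ((n.choose j : ℝ) * ((m.choose (g * j + Δ - s)) : ℝ)) /
    Real.sqrt ((2 ^ n : ℝ) * (((t + m).choose (g * j + Δ)) : ℝ))

/-- The post-deletion states `|±_s⟩ = Σ_j (±1)^j b_{j,s} |D^{N−t}_{gj+Δ−s}⟩`. -/
noncomputable def plusS (t m g n Δ s : ℕ) : (Fin m → Bool) → ℂ :=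
  ∑ j ∈ Finset.range (n + 1),
    ((bCoeff t m g n Δ j s : ℝ) : ℂ) • dickeD m (g * j + Δ - s)

noncomputable def minusS (t m g n Δ s : ℕ) : (Fin m → Bool) → ℂ :=
  ∑ j ∈ Finset.range (n + 1),
    ((-1 : ℂ) ^ j * ((bCoeff t m g n Δ j s : ℝ) : ℂ)) • dickeD m (g * j + Δ - s)

/- ### Auxiliary lemmas -/

lemma hamWeight_eq_sum {N : ℕ} (x : Fin N → Bool) :
    hamWeight x = ∑ i : Fin N, if x i = true then 1 else 0 := by
  rw [hamWeight, Finset.card_filter]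

lemma hamWeight_append {t m : ℕ} (x : Fin t → Bool) (y : Fin m → Bool) :
    hamWeight (Fin.append x y) = hamWeight x + hamWeight y := by
  simp only [hamWeight_eq_sum, Fin.sum_univ_add, Fin.append_left, Fin.append_right]

lemma hamWeight_le {t : ℕ} (x : Fin t → Bool) : hamWeight x ≤ t := by
  simpa [hamWeight] using (Finset.card_filter_le Finset.univ (fun i => x i = true))

lemma card_hamWeight (t s : ℕ) :
    ((Finset.univ : Finset (Fin t → Bool)).filter (fun x => hamWeight x = s)).card
      = t.choose s := by
  classical
  have h : ((Finset.univ : Finset (Fin t)).powersetCard s).card = t.choose s := by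
    simp
  rw [← h]
  refine Finset.card_bij' (fun x _ => Finset.univ.filter (fun i => x i = true))
    (fun S _ => fun i => decide (i ∈ S)) ?hi ?hj ?li ?ri
  case hi =>
    intro x hx
    simp only [Finset.mem_filter, Finset.mem_univ, true_and] at hx
    simp only [Finset.mem_powersetCard]
    exact ⟨Finset.filter_subset _ _, hx⟩
  case hj =>
    intro S hS
    simp only [Finset.mem_powersetCard] at hS
    simp only [Finset.mem_filter, Finset.mem_univ, true_and, hamWeight]
    rw [← hS.2]
    refine Finset.mem_filter.mpr ⟨Finset.mem_univ _, ?_⟩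
    congr 1
    ext i
    simp
  case li =>
    intro x hx
    funext i
    by_cases h : x i = true <;> simp [h]
  case ri =>
    intro S hS
    ext i
    simp

lemma sum_hamWeight {t : ℕ} (f : ℕ → ℂ) :
    ∑ x : Fin t → Bool, f (hamWeight x)
      = ∑ s ∈ Finset.range (t + 1), (t.choose s : ℂ) * f s := by
  classical
  rw [← Finset.sum_fiberwise_of_maps_to (g := hamWeight) (t := Finset.range (t+1))
    (fun x _ => Finset.mem_range.mpr (Nat.lt_succ_of_le (hamWeight_le x)))]
  refine Finset.sum_congr rfl fun s _ => ?_
  rw [Finset.sum_congr rfl (fun x hx => by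
    rw [(Finset.mem_filter.mp hx).2]), Finset.sum_const, card_hamWeight]
  simp [nsmul_eq_mul]

lemma ptrace_outer_dickeH (t m u v : ℕ) (hu : t ≤ u) (hv : t ≤ v) :
    ptrace (outer (dickeH (t + m) u) (dickeH (t + m) v)) =
      ∑ s ∈ Finset.range (t + 1),
        (t.choose s : ℂ) • outer (dickeH m (u - s)) (dickeH m (v - s)) := by
  funext y y'
  have key : ∀ x : Fin t → Bool,
      outer (dickeH (t + m) u) (dickeH (t + m) v) (Fin.append x y) (Fin.append x y')
        = (fun s => (if s + hamWeight y = u then 1 else 0) *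
            (if s + hamWeight y' = v then 1 else 0) : ℕ → ℂ) (hamWeight x) := by
    intro x
    simp only [outer, dickeH, hamWeight_append, apply_ite (starRingEnd ℂ), map_one, map_zero]
  have L : ptrace (outer (dickeH (t + m) u) (dickeH (t + m) v)) y y'
      = ∑ s ∈ Finset.range (t + 1), (t.choose s : ℂ) *
          ((if s + hamWeight y = u then 1 else 0) * (if s + hamWeight y' = v then 1 else 0)) := by
    show (∑ x : Fin t → Bool, outer (dickeH (t + m) u) (dickeH (t + m) v)
        (Fin.append x y) (Fin.append x y')) = _
    rw [Finset.sum_congr rfl (fun x _ => key x)]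
    exact sum_hamWeight (fun s => (if s + hamWeight y = u then 1 else 0) *
      (if s + hamWeight y' = v then 1 else 0))
  rw [L]
  simp only [Matrix.sum_apply]
  refine Finset.sum_congr rfl fun s hs => ?_
  have hst : s ≤ t := Nat.lt_succ_iff.mp (Finset.mem_range.mp hs)
  simp only [Matrix.smul_apply, outer, dickeH, smul_eq_mul,
    apply_ite (starRingEnd ℂ), map_one, map_zero]
  have h1 : (s + hamWeight y = u) ↔ (hamWeight y = u - s) := by omega
  have h2 : (s + hamWeight y' = v) ↔ (hamWeight y' = v - s) := by omega
  rw [if_congr h1 rfl rfl, if_congr h2 rfl rfl]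

lemma ptrace_sum {t m : ℕ} {ι : Type*} (F : Finset ι)
    (M : ι → Matrix (Fin (t + m) → Bool) (Fin (t + m) → Bool) ℂ) :
    ptrace (∑ j ∈ F, M j) = ∑ j ∈ F, ptrace (M j) := by
  funext y y'
  simp only [ptrace, Matrix.sum_apply]
  exact Finset.sum_comm

lemma ptrace_smul {t m : ℕ} (a : ℂ)
    (M : Matrix (Fin (t + m) → Bool) (Fin (t + m) → Bool) ℂ) :
    ptrace (a • M) = a • ptrace M := by
  funext y y'
  simp only [ptrace, Matrix.smul_apply, smul_eq_mul, Finset.mul_sum]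

lemma outer_sum {N : ℕ} {ι : Type*} (F : Finset ι) (c : ι → ℂ)
    (f : ι → (Fin N → Bool) → ℂ) :
    outer (∑ j ∈ F, c j • f j) (∑ k ∈ F, c k • f k)
      = ∑ j ∈ F, ∑ k ∈ F, (c j * (starRingEnd ℂ) (c k)) • outer (f j) (f k) := by
  funext x y
  simp only [outer, Finset.sum_apply, Pi.smul_apply, smul_eq_mul, map_sum, map_mul,
    Matrix.sum_apply, Matrix.smul_apply]
  rw [Finset.sum_mul_sum]
  refine Finset.sum_congr rfl fun j _ => Finset.sum_congr rfl fun k _ => by ring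

lemma key_lemma {t m : ℕ} (u : ℕ → ℕ) (γ : ℕ → ℂ) (F : Finset ℕ)
    (hu : ∀ j ∈ F, t ≤ u j) :
    ptrace (outer (∑ j ∈ F, γ j • dickeH (t + m) (u j)) (∑ j ∈ F, γ j • dickeH (t + m) (u j)))
      = ∑ s ∈ Finset.range (t + 1), (t.choose s : ℂ) •
          outer (∑ j ∈ F, γ j • dickeH m (u j - s)) (∑ j ∈ F, γ j • dickeH m (u j - s)) := by
  rw [outer_sum, ptrace_sum]
  have h1 : ∀ j ∈ F, ptrace (∑ k ∈ F, (γ j * (starRingEnd ℂ) (γ k)) •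
      outer (dickeH (t + m) (u j)) (dickeH (t + m) (u k)))
      = ∑ k ∈ F, ∑ s ∈ Finset.range (t + 1),
          ((t.choose s : ℂ) * (γ j * (starRingEnd ℂ) (γ k))) •
            outer (dickeH m (u j - s)) (dickeH m (u k - s)) := by
    intro j hj
    rw [ptrace_sum]
    refine Finset.sum_congr rfl fun k hk => ?_
    rw [ptrace_smul, ptrace_outer_dickeH t m (u j) (u k) (hu j hj) (hu k hk),
      Finset.smul_sum]
    refine Finset.sum_congr rfl fun s _ => ?_
    rw [smul_smul, mul_comm]
  rw [Finset.sum_congr rfl h1,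
    Finset.sum_congr rfl (fun s (_ : s ∈ Finset.range (t + 1)) => by
      rw [outer_sum, Finset.smul_sum,
        Finset.sum_congr rfl (fun j (_ : j ∈ F) => by
          rw [Finset.smul_sum,
            Finset.sum_congr rfl (fun k (_ : k ∈ F) => (smul_smul _ _ _ : _))])])]
  exact (Finset.sum_comm.trans (Finset.sum_congr rfl fun j _ => Finset.sum_comm)).symm

lemma coeffA_real (n j u N' : ℕ) :
    (Real.sqrt 2)⁻¹ * ((Real.sqrt (2 ^ (n - 1 : ℤ) : ℝ)⁻¹ * Real.sqrt (n.choose j)) *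
      (Real.sqrt (N'.choose u))⁻¹)
    = Real.sqrt (n.choose j) / Real.sqrt ((2 ^ n : ℝ) * (N'.choose u)) := by
  have h1 : ((2:ℝ) ^ ((n:ℤ) - 1)) = 2 ^ n / 2 := by
    rw [zpow_sub₀ (two_ne_zero), zpow_one, zpow_natCast]
  rw [h1, Real.sqrt_inv, Real.sqrt_div (by positivity), Real.sqrt_mul (by positivity), inv_div]
  have hA : Real.sqrt 2 ≠ 0 := by positivity
  have key : (Real.sqrt 2)⁻¹ * (Real.sqrt 2 / Real.sqrt ((2:ℝ) ^ n) * Real.sqrt (n.choose j) *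
      (Real.sqrt (N'.choose u))⁻¹)
      = ((Real.sqrt 2)⁻¹ * Real.sqrt 2) *
        (Real.sqrt (n.choose j) / Real.sqrt ((2:ℝ) ^ n) * (Real.sqrt (N'.choose u))⁻¹) := by
    ring
  rw [key, inv_mul_cancel₀ hA, one_mul, ← div_div, div_eq_mul_inv
    (Real.sqrt (n.choose j) / Real.sqrt ((2:ℝ) ^ n))]

lemma coeffB_real (cn cm D : ℝ) (hcn : 0 ≤ cn) (hcm : 0 < cm) :
    Real.sqrt (cn * cm) / Real.sqrt D * (Real.sqrt cm)⁻¹ = Real.sqrt cn / Real.sqrt D := by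
  rw [Real.sqrt_mul hcn, mul_div_right_comm, mul_assoc,
    mul_inv_cancel₀ (by positivity), mul_one]

/-- The common coefficient `γ_j = (α + (−1)^j β) √C(n,j)/√(2^n C(N, gj+Δ))`. -/
noncomputable def gam (t m g n Δ : ℕ) (α β : ℂ) (j : ℕ) : ℂ :=
  (α + (-1 : ℂ) ^ j * β) *
    ((Real.sqrt (n.choose j) /
      Real.sqrt ((2 ^ n : ℝ) * (((t + m).choose (g * j + Δ)) : ℝ)) : ℝ) : ℂ)

lemma psi_eq (t m g n Δ : ℕ) (α β : ℂ) :
    α • ((((Real.sqrt 2 : ℝ) : ℂ))⁻¹ • (sgnuZero t m g n Δ + sgnuOne t m g n Δ)) +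
    β • ((((Real.sqrt 2 : ℝ) : ℂ))⁻¹ • (sgnuZero t m g n Δ - sgnuOne t m g n Δ))
    = ∑ j ∈ Finset.range (n + 1), gam t m g n Δ α β j • dickeH (t + m) (g * j + Δ) := by
  classical
  set c : ℕ → ℂ := fun j =>
    ((Real.sqrt (2 ^ (n - 1 : ℤ) : ℝ)⁻¹ * Real.sqrt (n.choose j) : ℝ) : ℂ) with hc
  set D : ℕ → ((Fin (t + m) → Bool) → ℂ) := fun j => dickeD (t + m) (g * j + Δ) with hD
  have hOdd : (Finset.range (n + 1)).filter (fun j => Odd j)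
      = (Finset.range (n + 1)).filter (fun j => ¬ Even j) := by
    refine Finset.filter_congr fun j _ => ?_
    exact (Nat.not_even_iff_odd).symm
  have hplus : sgnuZero t m g n Δ + sgnuOne t m g n Δ
      = ∑ j ∈ Finset.range (n + 1), c j • D j := by
    unfold sgnuZero sgnuOne
    rw [hOdd, Finset.sum_filter_add_sum_filter_not]
  have hminus : sgnuZero t m g n Δ - sgnuOne t m g n Δ
      = ∑ j ∈ Finset.range (n + 1), ((-1 : ℂ) ^ j * c j) • D j := by
    unfold sgnuZero sgnuOne
    have e1 : ∑ j ∈ (Finset.range (n + 1)).filter (fun j => Even j), c j • D j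
        = ∑ j ∈ (Finset.range (n + 1)).filter (fun j => Even j),
            ((-1 : ℂ) ^ j * c j) • D j := by
      refine Finset.sum_congr rfl fun j hj => ?_
      rw [((Finset.mem_filter.mp hj).2 : Even j).neg_one_pow, one_mul]
    have e2 : -(∑ j ∈ (Finset.range (n + 1)).filter (fun j => Odd j), c j • D j)
        = ∑ j ∈ (Finset.range (n + 1)).filter (fun j => ¬ Even j),
            ((-1 : ℂ) ^ j * c j) • D j := by
      rw [← Finset.sum_neg_distrib, hOdd]
      refine Finset.sum_congr rfl fun j hj => ?_
      have hjo : Odd j := Nat.not_even_iff_odd.mp (Finset.mem_filter.mp hj).2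
      rw [hjo.neg_one_pow, neg_one_mul, neg_smul]
    rw [sub_eq_add_neg, e1, e2, Finset.sum_filter_add_sum_filter_not]
  rw [hplus, hminus, Finset.smul_sum, Finset.smul_sum, Finset.smul_sum, Finset.smul_sum,
    ← Finset.sum_add_distrib]
  refine Finset.sum_congr rfl fun j hj => ?_
  funext x
  simp only [hc, hD, Pi.add_apply, Pi.smul_apply, smul_eq_mul, dickeD]
  unfold gam
  rw [← coeffA_real n j (g * j + Δ) (t + m)]
  push_cast
  ring

lemma psiS_eq (t m g n Δ s : ℕ) (α β : ℂ) (hm : g * n + Δ ≤ m) :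
    α • plusS t m g n Δ s + β • minusS t m g n Δ s
      = ∑ j ∈ Finset.range (n + 1), gam t m g n Δ α β j • dickeH m (g * j + Δ - s) := by
  unfold plusS minusS
  rw [Finset.smul_sum, Finset.smul_sum, ← Finset.sum_add_distrib]
  refine Finset.sum_congr rfl fun j hj => ?_
  have hj' : j ≤ n := Nat.lt_succ_iff.mp (Finset.mem_range.mp hj)
  have hwm : g * j + Δ - s ≤ m := by
    have := Nat.mul_le_mul_left g hj'
    omega
  have hcm : (0:ℝ) < (m.choose (g * j + Δ - s) : ℝ) := by
    exact_mod_cast Nat.choose_pos hwm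
  funext x
  simp only [Pi.add_apply, Pi.smul_apply, smul_eq_mul, dickeD]
  unfold gam bCoeff
  rw [← coeffB_real ((n.choose j : ℝ)) ((m.choose (g * j + Δ - s)) : ℝ)
    ((2 ^ n : ℝ) * (((t + m).choose (g * j + Δ)) : ℝ)) (by positivity) hcm]
  push_cast
  ring

/-- for `|ψ⟩ = α|+_L⟩ + β|−_L⟩` in the `Δ`-shifted gnu codespace
with `t ≤ Δ` and `gn + Δ ≤ N − t` (here `N = t + m`),
`Tr_t(|ψ⟩⟨ψ|) = Σ_{s=0}^{t} C(t,s) |ψ_s⟩⟨ψ_s|` with `|ψ_s⟩ = α|+_s⟩ + β|−_s⟩`. -/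
theorem ptrace_shifted_gnu_state (t m g n Δ : ℕ) (α β : ℂ)
    (htΔ : t ≤ Δ) (hm : g * n + Δ ≤ m) :
    ptrace (outer
        (α • ((((Real.sqrt 2 : ℝ) : ℂ))⁻¹ • (sgnuZero t m g n Δ + sgnuOne t m g n Δ)) +
         β • ((((Real.sqrt 2 : ℝ) : ℂ))⁻¹ • (sgnuZero t m g n Δ - sgnuOne t m g n Δ)))
        (α • ((((Real.sqrt 2 : ℝ) : ℂ))⁻¹ • (sgnuZero t m g n Δ + sgnuOne t m g n Δ)) +
         β • ((((Real.sqrt 2 : ℝ) : ℂ))⁻¹ • (sgnuZero t m g n Δ - sgnuOne t m g n Δ)))) =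
      ∑ s ∈ Finset.range (t + 1),
        (t.choose s : ℂ) •
          outer (α • plusS t m g n Δ s + β • minusS t m g n Δ s)
                (α • plusS t m g n Δ s + β • minusS t m g n Δ s) := by
  rw [psi_eq t m g n Δ α β]
  rw [key_lemma (fun j => g * j + Δ) (gam t m g n Δ α β) (Finset.range (n + 1))
    (fun j _ => le_trans htΔ (Nat.le_add_left Δ (g * j)))]
  refine Finset.sum_congr rfl fun s _ => ?_
  rw [psiS_eq t m g n Δ s α β hm]
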